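/- Necessity via a single best channel: if the WNCS is mean-square stabilizable then for every unstable plant i (ρ(A_i) ≥ 1), ρ(A_i)² · max( min_m ξ̄ˢ_{m,i}, min_m ξ̄ᶜ_{m,i} ) < 1 is required, given the classical single-link result that a scalar-reduced system x_{k+1}=A x_k over an i.i.d. erasure channel with erasure probability p is mean-square stabilizable iff ρ(A)²·p < 1. Formally: if limsup (1/K)Σ E[‖x_k‖²] < ∞ for a system that, with probability p per slot independently, evolves open-loop as x_{k+1} = A x_k + w_k (erasure), and is reset optimally otherwise, then ρ(A)²·p < 1 provided Q_w ≻ 0. -/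

import Mathlib

open Matrix Filter Finset
open scoped ENNReal NNReal

variable {n : ℕ}

lemma psd_trace_nonneg {M : Matrix (Fin n) (Fin n) ℝ} (hM : M.PosSemidef) : 0 ≤ M.trace := by
  refine Finset.sum_nonneg fun i _ => ?_
  exact hM.diag_nonneg

lemma psd_smul' {M : Matrix (Fin n) (Fin n) ℝ} (hM : M.PosSemidef) {c : ℝ} (hc : 0 ≤ c) :
    (c • M).PosSemidef := by
  constructor
  · unfold Matrix.IsHermitian
    rw [conjTranspose_smul]
    simp only [star_trivial]
    rw [hM.1.eq]
  · intro x
    have := hM.2 x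
    exact (hM.smul hc).2 x

lemma psd_trace_mono {X Y : Matrix (Fin n) (Fin n) ℝ} (h : (X - Y).PosSemidef) :
    Y.trace ≤ X.trace := by
  have := psd_trace_nonneg h
  rw [trace_sub] at this; linarith

lemma psd_congr {M : Matrix (Fin n) (Fin n) ℝ} (hM : M.PosSemidef)
    (B : Matrix (Fin n) (Fin n) ℝ) : (B * M * Bᵀ).PosSemidef := by
  have := hM.mul_mul_conjTranspose_same B
  rwa [conjTranspose_eq_transpose_of_trivial] at this

lemma exists_smul_one_le {Qw : Matrix (Fin n) (Fin n) ℝ} (hn : 0 < n) (hQ : Qw.PosDef) :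
    ∃ c : ℝ, 0 < c ∧ (Qw - c • 1).PosSemidef := by
  haveI : NeZero n := ⟨hn.ne'⟩
  have hH : Qw.IsHermitian := hQ.1
  have hev := hQ.eigenvalues_pos
  set c : ℝ := Finset.univ.inf' (Finset.univ_nonempty) hH.eigenvalues with hc
  refine ⟨c, ?_, ?_⟩
  · obtain ⟨i, _, hi⟩ := Finset.exists_mem_eq_inf' (Finset.univ_nonempty) hH.eigenvalues
    rw [hc, hi]; exact hev i
  · have hU : (hH.eigenvectorUnitary : Matrix (Fin n) (Fin n) ℝ) *
        star (hH.eigenvectorUnitary : Matrix (Fin n) (Fin n) ℝ) = 1 :=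
      (Matrix.mem_unitaryGroup_iff).mp (hH.eigenvectorUnitary).2
    have hspec := hH.spectral_theorem
    have hkey : Qw - c • 1 = (hH.eigenvectorUnitary : Matrix (Fin n) (Fin n) ℝ) *
        (diagonal (RCLike.ofReal ∘ hH.eigenvalues) - c • 1) *
        star (hH.eigenvectorUnitary : Matrix (Fin n) (Fin n) ℝ) := by
      rw [Unitary.conjStarAlgAut_apply] at hspec
      rw [Matrix.mul_sub, Matrix.sub_mul, ← hspec]
      congr 1
      rw [Matrix.mul_smul, Matrix.smul_mul, mul_one, hU]
    rw [hkey, Matrix.star_eq_conjTranspose]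
    apply Matrix.PosSemidef.mul_mul_conjTranspose_same
    have : diagonal (RCLike.ofReal ∘ hH.eigenvalues) - c • (1 : Matrix (Fin n) (Fin n) ℝ)
        = diagonal (fun i => hH.eigenvalues i - c) := by
      rw [Matrix.smul_one_eq_diagonal, ← Matrix.diagonal_sub]
      congr 1
    rw [this]
    refine Matrix.PosSemidef.diagonal fun i => ?_
    simp only [Pi.le_def, Pi.zero_apply, sub_nonneg] at *
    exact Finset.inf'_le _ (Finset.mem_univ i)

variable {n : ℕ}

lemma trace_mul_transpose_self (B : Matrix (Fin n) (Fin n) ℝ) :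
    (B * Bᵀ).trace = ∑ i, ∑ j, (B i j) ^ 2 := by
  simp [Matrix.trace, Matrix.diag, Matrix.mul_apply, sq]

lemma rad_pow_le (A : Matrix (Fin n) (Fin n) ℝ) (m : ℕ) :
    ((spectralRadius ℂ (A.map (algebraMap ℝ ℂ))).toReal) ^ (2*(m+1)) ≤
      (A^(m+1) * (A^(m+1))ᵀ).trace * n := by
  letI := Matrix.frobeniusNormedAddCommGroup (m := Fin n) (n := Fin n) (α := ℂ)
  letI := Matrix.frobeniusNormedRing (m := Fin n) (α := ℂ)
  letI := Matrix.frobeniusNormedAlgebra (m := Fin n) (α := ℂ) (R := ℂ)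
  letI := Matrix.frobeniusNormedAddCommGroup (m := Fin n) (n := Fin n) (α := ℝ)
  set a := A.map (algebraMap ℝ ℂ) with ha
  set s := spectralRadius ℂ a with hs
  set x : ℝ≥0 := ‖a ^ (m+1)‖₊ with hx
  set y : ℝ≥0 := ‖(1 : Matrix (Fin n) (Fin n) ℂ)‖₊ with hy
  have h1 : s ≤ ((x : ℝ≥0∞)) ^ (1/(m+1:ℕ) : ℝ) * ((y : ℝ≥0∞)) ^ (1/(m+1:ℕ) : ℝ) :=
    by push_cast; exact spectrum.spectralRadius_le_pow_nnnorm_pow_one_div ℂ a m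
  have hme : ((m+1:ℕ) : ℝ) ≠ 0 := by positivity
  have h2 : s ^ (m+1) ≤ (x : ℝ≥0∞) * y := by
    calc s ^ (m+1) ≤ ((x : ℝ≥0∞) ^ (1/(m+1:ℕ) : ℝ) * (y : ℝ≥0∞) ^ (1/(m+1:ℕ) : ℝ)) ^ (m+1) :=
          pow_le_pow_left' h1 _
      _ = (x : ℝ≥0∞) * y := by
          rw [mul_pow, ← ENNReal.rpow_natCast ((x : ℝ≥0∞) ^ (1/(m+1:ℕ) : ℝ)),
            ← ENNReal.rpow_natCast ((y : ℝ≥0∞) ^ (1/(m+1:ℕ) : ℝ)),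
            ← ENNReal.rpow_mul, ← ENNReal.rpow_mul, one_div,
            inv_mul_cancel₀ hme, ENNReal.rpow_one, ENNReal.rpow_one]
  have hfin : ((x : ℝ≥0∞) * y) ≠ ⊤ := by
    simp [ENNReal.mul_ne_top]
  have h3 : s.toReal ^ (m+1) ≤ (x : ℝ) * y := by
    have := ENNReal.toReal_mono hfin h2
    rwa [ENNReal.toReal_pow, ENNReal.toReal_mul, ENNReal.coe_toReal, ENNReal.coe_toReal] at this
  -- now square
  have hxsq : ((x:ℝ))^2 = (A^(m+1) * (A^(m+1))ᵀ).trace := by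
    have hmap : a ^ (m+1) = (A^(m+1)).map (algebraMap ℝ ℂ) := by
      rw [ha, ← RingHom.mapMatrix_apply, ← RingHom.mapMatrix_apply, map_pow]
    have hnn : x = ‖A^(m+1)‖₊ := by
      rw [hx, hmap]
      exact Matrix.frobenius_nnnorm_map_eq _ _ (fun r => by simp)
    have : ((x:ℝ)) = ‖A^(m+1)‖ := by rw [hnn]; rfl
    rw [this, trace_mul_transpose_self, Matrix.frobenius_norm_def]
    rw [← Real.rpow_natCast _ 2, ← Real.rpow_mul (by positivity)]
    norm_num
  have hysq : ((y:ℝ))^2 = n := by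
    have : y = NNReal.sqrt (Fintype.card (Fin n)) * ‖(1:ℂ)‖₊ := Matrix.frobenius_nnnorm_one
    rw [this]
    push_cast
    simp [Real.sq_sqrt]
  calc s.toReal ^ (2*(m+1)) = (s.toReal ^ (m+1))^2 := by rw [← pow_mul, mul_comm]
    _ ≤ ((x:ℝ) * y)^2 := by
        apply pow_le_pow_left₀ (by positivity) h3
    _ = (A^(m+1) * (A^(m+1))ᵀ).trace * n := by rw [mul_pow, hxsq, hysq]

/-- Necessity of `ρ(A)²·p < 1`: if the second-moment matrices `P k` of a system
that with probability `p` per slot evolves open-loop (`P (k+1) ⪰ p(A P k Aᵀ + Q_w)`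
in the PSD order) have a bounded time-averaged trace, and `Q_w ≻ 0`, `ρ(A) ≥ 1`,
then `ρ(A)² p < 1`, where `ρ(A)` is the complex spectral radius of `A`. -/
theorem stmt19 (n : ℕ) (A Qw : Matrix (Fin n) (Fin n) ℝ) (p : ℝ)
    (hp0 : 0 ≤ p) (hp1 : p ≤ 1)
    (hQ : Qw.PosDef)
    (hρ : 1 ≤ ((spectralRadius ℂ (A.map (algebraMap ℝ ℂ))).toReal))
    (P : ℕ → Matrix (Fin n) (Fin n) ℝ)
    (hPsd : ∀ k, (P k).PosSemidef)
    (hrec : ∀ k, (P (k + 1) - p • (A * P k * Aᵀ + Qw)).PosSemidef)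
    (hbound : ∃ Mb : ℝ, ∀ᶠ K : ℕ in Filter.atTop,
      (1 / (K : ℝ)) * ∑ k ∈ Finset.range K, (P k).trace ≤ Mb) :
    ((spectralRadius ℂ (A.map (algebraMap ℝ ℂ))).toReal) ^ 2 * p < 1 := by
  set r := ((spectralRadius ℂ (A.map (algebraMap ℝ ℂ))).toReal) with hr
  -- dispatch n = 0
  rcases Nat.eq_zero_or_pos n with hn0 | hn
  · exfalso
    subst hn0
    haveI : Subsingleton (Matrix (Fin 0) (Fin 0) ℂ) := by
      constructor; intro a b; ext i j; exact absurd i.2 (by omega)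
    have hsp : spectrum ℂ (A.map (algebraMap ℝ ℂ)) = ∅ := by
      ext k
      simp only [Set.mem_empty_iff_false, iff_false, spectrum.mem_iff, not_not]
      exact isUnit_of_subsingleton _
    have : spectralRadius ℂ (A.map (algebraMap ℝ ℂ)) = 0 := by
      rw [spectralRadius, hsp]
      simp
    rw [hr, this] at hρ
    norm_num at hρ
  -- p = 0 case
  rcases eq_or_lt_of_le hp0 with hp | hp
  · rw [← hp]; norm_num
  by_contra hcon
  push_neg at hcon
  have hr1 : (1:ℝ) ≤ r ^ 2 * p := hcon
  obtain ⟨c, hc, hQc⟩ := exists_smul_one_le hn hQ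
  have hncast : (0:ℝ) < n := by exact_mod_cast hn
  -- the accumulated sum
  set S : ℕ → Matrix (Fin n) (Fin n) ℝ :=
    fun k => ∑ j ∈ Finset.range k, p^(j+1) • (A^j * Qw * (Aᵀ)^j) with hS
  have hSrec : ∀ k, S (k+1) = p • (A * S k * Aᵀ) + p • Qw := by
    intro k
    simp only [hS]
    rw [Finset.sum_range_succ']
    simp only [zero_add, pow_zero, pow_one, Matrix.one_mul, Matrix.mul_one]
    congr 1
    rw [Finset.mul_sum, Finset.sum_mul, Finset.smul_sum]
    refine Finset.sum_congr rfl fun j _ => ?_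
    rw [Matrix.mul_smul, Matrix.smul_mul, smul_smul, ← pow_succ']
    congr 1
    rw [pow_succ' A, pow_succ Aᵀ]
    noncomm_ring
  have hPS : ∀ k, (P k - S k).PosSemidef := by
    intro k
    induction k with
    | zero => simpa [hS] using hPsd 0
    | succ k ih =>
      have hkey : P (k+1) - S (k+1) =
          (P (k+1) - p • (A * P k * Aᵀ + Qw)) + p • (A * (P k - S k) * Aᵀ) := by
        rw [hSrec k, Matrix.mul_sub, Matrix.sub_mul, smul_sub, smul_add]
        abel
      rw [hkey]
      exact (hrec k).add (psd_smul' (psd_congr ih A) hp0)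
  -- per-term trace bound
  set e : ℝ := c * p / n with he
  have he0 : 0 < e := by positivity
  have hterm : ∀ j : ℕ, e * (r^2*p)^j ≤ p^(j+1) * (A^j * Qw * (Aᵀ)^j).trace := by
    intro j
    have htp : (Aᵀ)^j = (A^j)ᵀ := (Matrix.transpose_pow A j).symm
    have hA1 : c * ((A^j * (A^j)ᵀ).trace) ≤ (A^j * Qw * (Aᵀ)^j).trace := by
      have hpsd : (A^j * Qw * (Aᵀ)^j - c • (A^j * (A^j)ᵀ)).PosSemidef := by
        have h2 : A^j * (Qw - c • 1) * (A^j)ᵀ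
            = A^j * Qw * (Aᵀ)^j - c • (A^j * (A^j)ᵀ) := by
          rw [htp, Matrix.mul_sub, Matrix.sub_mul, Matrix.mul_smul, Matrix.smul_mul,
            Matrix.mul_one]
        rw [← h2]
        exact psd_congr hQc _
      have := psd_trace_mono hpsd
      rwa [trace_smul, smul_eq_mul] at this
    have hA2 : r^(2*j) ≤ (A^j * (A^j)ᵀ).trace * n := by
      rcases Nat.eq_zero_or_pos j with hj0 | hj
      · subst hj0
        simp only [pow_zero, Matrix.transpose_one, Matrix.one_mul, Matrix.trace_one,
          mul_zero, Fintype.card_fin]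
        have : (1:ℝ) ≤ n := by exact_mod_cast hn
        nlinarith
      · obtain ⟨m, rfl⟩ := Nat.exists_eq_add_of_lt hj
        simpa [hr] using rad_pow_le A m
    have hppos : (0:ℝ) ≤ p^(j+1) := by positivity
    have hr2 : (r^2*p)^j = r^(2*j) * p^j := by
      rw [mul_pow, ← pow_mul]
    have h3 : e * (r^2*p)^j = (c/n) * (p^(j+1) * r^(2*j)) := by
      rw [hr2, he]; ring
    rw [h3]
    have h4 : (c/n) * (p^(j+1) * r^(2*j)) ≤ (c/n) * (p^(j+1) * ((A^j * (A^j)ᵀ).trace * n)) := by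
      apply mul_le_mul_of_nonneg_left _ (by positivity)
      exact mul_le_mul_of_nonneg_left hA2 hppos
    refine h4.trans ?_
    have h5 : (c/n) * (p^(j+1) * ((A^j * (A^j)ᵀ).trace * n)) = p^(j+1) * (c * (A^j * (A^j)ᵀ).trace) := by
      field_simp
    rw [h5]
    exact mul_le_mul_of_nonneg_left hA1 hppos
  -- lower bound on trace of P k
  have htr : ∀ k : ℕ, e * k ≤ (P k).trace := by
    intro k
    have h1 : (S k).trace ≤ (P k).trace := psd_trace_mono (hPS k)
    have h2 : ∑ j ∈ Finset.range k, e * (r^2*p)^j ≤ (S k).trace := by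
      rw [hS, Matrix.trace_sum]
      refine Finset.sum_le_sum fun j _ => ?_
      rw [trace_smul, smul_eq_mul]
      exact hterm j
    have h3 : e * k ≤ ∑ j ∈ Finset.range k, e * (r^2*p)^j := by
      rw [← Finset.mul_sum]
      apply mul_le_mul_of_nonneg_left _ he0.le
      calc (k:ℝ) = ∑ _j ∈ Finset.range k, (1:ℝ) := by simp
        _ ≤ ∑ j ∈ Finset.range k, (r^2*p)^j :=
          Finset.sum_le_sum fun j _ => one_le_pow₀ hr1
    linarith
  -- contradiction with bounded average
  obtain ⟨Mb, hMb⟩ := hbound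
  rw [Filter.eventually_atTop] at hMb
  obtain ⟨N, hN⟩ := hMb
  obtain ⟨K0, hK0⟩ := exists_nat_gt (2*Mb/e + 1)
  set K : ℕ := max (max N K0) 1 with hK
  have hKN : N ≤ K := le_trans (le_max_left _ _) (le_max_left _ _)
  have hK1 : 1 ≤ K := le_max_right _ _
  have hKr : (1:ℝ) ≤ (K:ℝ) := by exact_mod_cast hK1
  have hKK0 : (K0:ℝ) ≤ K := by
    exact_mod_cast le_trans (le_max_right N K0) (le_max_left _ _)
  have hb := hN K hKN
  have hgauss : (∑ k ∈ Finset.range K, (k:ℝ)) = K*(K-1)/2 := by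
    have h2 := Finset.sum_range_id_mul_two K
    have : ((∑ i ∈ Finset.range K, i : ℕ) : ℝ) * 2 = (K:ℝ) * ((K:ℝ) - 1) := by
      rw [← Nat.cast_ofNat, ← Nat.cast_mul, h2, Nat.cast_mul, Nat.cast_sub hK1]
      push_cast
      ring
    push_cast at this ⊢
    linarith
  have hsum : e * ((K:ℝ)*((K:ℝ)-1)/2) ≤ ∑ k ∈ Finset.range K, (P k).trace := by
    calc e * ((K:ℝ)*((K:ℝ)-1)/2) = ∑ k ∈ Finset.range K, e * (k:ℝ) := by
          rw [← Finset.mul_sum, hgauss]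
      _ ≤ ∑ k ∈ Finset.range K, (P k).trace := Finset.sum_le_sum fun k _ => htr k
  have havg : e * ((K:ℝ)-1)/2 ≤ (1 / (K : ℝ)) * ∑ k ∈ Finset.range K, (P k).trace := by
    have hKpos : (0:ℝ) < K := by linarith
    have h := mul_le_mul_of_nonneg_left hsum (le_of_lt (one_div_pos.mpr hKpos))
    have heq : (1/(K:ℝ)) * (e * ((K:ℝ)*((K:ℝ)-1)/2)) = e * ((K:ℝ)-1)/2 := by
      field_simp
    linarith
  have hbig : Mb < e * ((K:ℝ)-1)/2 := by
    have h1 : 2*Mb/e + 1 < (K:ℝ) := lt_of_lt_of_le hK0 hKK0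
    have h2 : 2*Mb/e < (K:ℝ) - 1 := by linarith
    have h3 : 2*Mb < e * ((K:ℝ)-1) := by
      rw [div_lt_iff₀ he0] at h2
      linarith
    linarith
  linarith
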